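/- For every n ≥ 0, in the polynomial ring ℤ[x_0, …, x_n], the sum over all Gelfand–Tsetlin patterns (h_{i,j})_{0 ≤ j ≤ i ≤ n} with bottom row h_{n,j} = j (j = 0, …, n) of the monomial ∏_{i=0}^{n} x_i^{s_i − s_{i−1}}, where s_i = Σ_{j=0}^{i} h_{i,j} and s_{−1} = 0, equals the product ∏_{0 ≤ i < j ≤ n} (x_i + x_j). (This is the product formula for the Schur polynomial of the staircase partition (n, n−1, …, 1, 0) in n+1 variables, expressed via its Gelfand–Tsetlin expansion.) -/

import Mathlib

open Finset
open Finset


/-- `h` is a Gelfand–Tsetlin pattern of size `n+1`: a triangular array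
`(h i j)_{0 ≤ j ≤ i ≤ n}` of nonnegative integers satisfying the interlacing conditions
`h i j ≤ h (i-1) j ≤ h i (j+1)` for `1 ≤ i ≤ n`, `0 ≤ j ≤ i-1`.
(Entries outside the triangle are normalized to `0`.) -/
def IsGTPattern (n : ℕ) (h : ℕ → ℕ → ℕ) : Prop :=
  (∀ i j, 1 ≤ i → i ≤ n → j ≤ i - 1 →
    h i j ≤ h (i - 1) j ∧ h (i - 1) j ≤ h i (j + 1)) ∧
  (∀ i j, ¬(j ≤ i ∧ i ≤ n) → h i j = 0)

/-- `s_i`: the sum of the entries in row `i` of the triangular array `h`. -/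
def rowSum (h : ℕ → ℕ → ℕ) (i : ℕ) : ℕ := ∑ j ∈ Finset.range (i + 1), h i j

/-- The weight of a Gelfand–Tsetlin pattern in `ℤ[x_0, …, x_n]`:
`∏_{i=0}^n x_i ^ (s_i - s_{i-1})`, where `s_{-1} = 0`. -/
noncomputable def gtWeight (n : ℕ) (h : ℕ → ℕ → ℕ) : MvPolynomial (Fin (n + 1)) ℤ :=
  ∏ i : Fin (n + 1),
    MvPolynomial.X i ^ (rowSum h (i : ℕ) - (if (i : ℕ) = 0 then 0 else rowSum h ((i : ℕ) - 1)))

namespace GTAux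

/-- interlacing rows finset -/
def Fs (m : ℕ) (l : ℕ → ℕ) : Finset (Fin (m+1) → ℕ) :=
  Fintype.piFinset fun j => Finset.Icc (l j) (l ((j : ℕ)+1))

lemma mem_Fs {m : ℕ} {l : ℕ → ℕ} {f : Fin (m+1) → ℕ} :
    f ∈ Fs m l ↔ ∀ j : Fin (m+1), l j ≤ f j ∧ f j ≤ l ((j:ℕ)+1) := by
  simp [Fs, Fintype.mem_piFinset, Finset.mem_Icc]

def extRow (m : ℕ) (f : Fin (m+1) → ℕ) : ℕ → ℕ :=
  fun j => if h : j < m+1 then f ⟨j, h⟩ else 0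

@[simp] lemma extRow_coe {m : ℕ} (f : Fin (m+1) → ℕ) (j : Fin (m+1)) :
    extRow m f (j : ℕ) = f j := by
  simp [extRow, j.isLt]

def wt (m : ℕ) (l : ℕ → ℕ) (f : Fin (m+1) → ℕ) : ℕ :=
  l 0 + ∑ j : Fin (m+1), (l ((j:ℕ)+1) - f j)

variable {R : Type*} [CommRing R] (x : ℕ → R)

/-- alternant -/
noncomputable def alt (m : ℕ) (l : ℕ → ℕ) : R :=
  Matrix.det (Matrix.of fun i j : Fin (m+1) => x (i:ℕ) ^ (l (j:ℕ) + (j:ℕ)))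

noncomputable def Sch : (m : ℕ) → (ℕ → ℕ) → R
  | 0, l => x 0 ^ l 0
  | (m+1), l => ∑ f ∈ Fs m l, x (m+1) ^ wt m l f * Sch m (extRow m f)

lemma telescope (y z : R) (a b c : ℕ) (hab : a ≤ b) :
    (y - z) * ∑ t ∈ Finset.Icc a b, y ^ (b - t) * z ^ (t + c) =
      y ^ (b - a + 1) * z ^ (a + c) - z ^ (b + 1 + c) := by
  induction b, hab using Nat.le_induction with
  | base =>
      simp [Nat.sub_self]
      ring
  | succ b hab ih =>
      have h1 : Finset.Icc a (b+1) = insert (b+1) (Finset.Icc a b) := by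
        rw [← Finset.insert_Icc_right_eq_Icc_add_one (by omega)]
      rw [h1, Finset.sum_insert (by simp)]
      have h2 : ∀ t ∈ Finset.Icc a b, y ^ (b + 1 - t) * z ^ (t + c)
          = y * (y ^ (b - t) * z ^ (t + c)) := by
        intro t ht
        rw [Finset.mem_Icc] at ht
        have : b + 1 - t = (b - t) + 1 := by omega
        rw [this, pow_succ]
        ring
      rw [Finset.sum_congr rfl h2, ← Finset.mul_sum]
      have h3 : b + 1 - a + 1 = (b - a + 1) + 1 := by omega
      rw [h3]
      rw [mul_add]
      simp only [Nat.sub_self, pow_zero]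
      linear_combination y * ih


def thr (m : ℕ) (k : Fin (m+2)) : Fin (m+1) → Bool := fun j => decide ((k:ℕ) ≤ (j:ℕ))

lemma thr_inj (m : ℕ) : Function.Injective (thr m) := by
  have aux : ∀ k k' : Fin (m+2), (k:ℕ) < (k':ℕ) → thr m k ≠ thr m k' := by
    intro k k' hlt h
    have hk : (k:ℕ) < m + 1 := by have := k'.isLt; omega
    have := congrFun h ⟨(k:ℕ), hk⟩
    simp only [thr, decide_eq_decide] at this
    omega
  intro k k' h
  rcases lt_trichotomy (k:ℕ) (k':ℕ) with h1 | h1 | h1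
  · exact absurd h (aux _ _ h1)
  · exact Fin.ext h1
  · exact absurd h.symm (aux _ _ h1)

lemma thr_exists (m : ℕ) (r : Fin (m+1) → Bool)
    (hr : ∀ j : Fin m, r j.castSucc = true → r j.succ = true) :
    ∃ k : Fin (m+2), r = thr m k := by
  have step : ∀ (j : ℕ) (h : j + 1 < m + 1), r ⟨j, by omega⟩ = true → r ⟨j+1, h⟩ = true := by
    intro j h hj
    have := hr ⟨j, by omega⟩
    simp only [Fin.castSucc_mk, Fin.succ_mk] at this
    exact this hj
  have mono : ∀ (d j : ℕ) (h : j + d < m + 1), r ⟨j, by omega⟩ = true → r ⟨j + d, h⟩ = true := by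
    intro d
    induction d with
    | zero => intro j h hj; exact hj
    | succ d ih =>
        intro j h hj
        exact step (j + d) h (ih j (by omega) hj)
  by_cases hex : ∃ j : Fin (m+1), r j = true
  · classical
    set S := univ.filter (fun j : Fin (m+1) => r j = true) with hSdef
    have hS : S.Nonempty := by
      obtain ⟨j, hj⟩ := hex
      exact ⟨j, by simp [hSdef, hj]⟩
    set k := S.min' hS with hk
    refine ⟨⟨(k:ℕ), by have := k.isLt; omega⟩, ?_⟩
    funext j
    have hkS : k ∈ S := S.min'_mem hS
    have hkr : r k = true := by simpa [hSdef] using hkS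
    by_cases hle : (k:ℕ) ≤ (j:ℕ)
    · have h2 : r ⟨(k:ℕ) + ((j:ℕ) - (k:ℕ)), by have := j.isLt; omega⟩ = true := by
        apply mono
        simpa using hkr
      have h3 : (⟨(k:ℕ) + ((j:ℕ) - (k:ℕ)), by have := j.isLt; omega⟩ : Fin (m+1)) = j :=
        Fin.ext (by simp; omega)
      rw [h3] at h2
      simp [thr, hle, h2]
    · have h2 : r j ≠ true := by
        intro hrj
        have : j ∈ S := by simp [hSdef, hrj]
        have := S.min'_le j this
        omega
      simp [thr, hle, Bool.not_eq_true] at h2 ⊢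
      simpa using h2
  · push_neg at hex
    refine ⟨⟨m+1, by omega⟩, ?_⟩
    funext j
    have := hex j
    simp only [Bool.not_eq_true] at this
    have hj : ¬ (m + 1 ≤ (j:ℕ)) := by have := j.isLt; omega
    simp [thr, hj, this]


variable {R : Type*} [CommRing R]

lemma exps (l : ℕ → ℕ) (m : ℕ) (hl : ∀ j ≤ m, l j ≤ l (j+1)) :
    ∀ k, k ≤ m + 1 → l 0 + ∑ j ∈ Finset.range k, (l (j+1) - l j + 1) = l k + k := by
  intro k
  induction k with
  | zero => simp
  | succ k ih =>
      intro hk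
      rw [Finset.sum_range_succ]
      have h1 := ih (by omega)
      have h2 := hl k (by omega)
      generalize hSg : (∑ j ∈ Finset.range k, (l (j+1) - l j + 1)) = Sg at h1 ⊢
      omega

/-- transposed form of the alternant -/
lemma altT (x : ℕ → R) (m : ℕ) (l : ℕ → ℕ) :
    alt x m l = Matrix.det (Matrix.of fun j i : Fin (m+1) => x (i:ℕ) ^ (l (j:ℕ) + (j:ℕ))) := by
  rw [alt, ← Matrix.det_transpose]
  congr 1

lemma key (x : ℕ → R) (m : ℕ) (l : ℕ → ℕ) (hl : ∀ j ≤ m, l j ≤ l (j+1)) :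
    alt x (m+1) l =
      (∏ i : Fin (m+1), (x (m+1) - x (i:ℕ))) *
        ∑ f ∈ Fs m l, x (m+1) ^ wt m l f * alt x m (extRow m f) := by
  classical
  set y := x (m+1) with hy
  -- Step A : the interlacing sum as a determinant of column-sums
  have stepA : ∑ f ∈ Fs m l, y ^ wt m l f * alt x m (extRow m f)
      = y ^ l 0 * Matrix.det (Matrix.of fun j i : Fin (m+1) =>
          ∑ t ∈ Finset.Icc (l (j:ℕ)) (l ((j:ℕ)+1)), y ^ (l ((j:ℕ)+1) - t) * x (i:ℕ) ^ (t + (j:ℕ))) := by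
    have hrows : (Matrix.of fun j i : Fin (m+1) =>
          ∑ t ∈ Finset.Icc (l (j:ℕ)) (l ((j:ℕ)+1)), y ^ (l ((j:ℕ)+1) - t) * x (i:ℕ) ^ (t + (j:ℕ)))
        = Matrix.of (fun j : Fin (m+1) => ∑ t ∈ Finset.Icc (l (j:ℕ)) (l ((j:ℕ)+1)),
            (fun i : Fin (m+1) => y ^ (l ((j:ℕ)+1) - t) * x (i:ℕ) ^ (t + (j:ℕ)))) := by
      funext j i
      simp [Finset.sum_apply]
    have hdet : Matrix.det (Matrix.of fun j i : Fin (m+1) =>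
          ∑ t ∈ Finset.Icc (l (j:ℕ)) (l ((j:ℕ)+1)), y ^ (l ((j:ℕ)+1) - t) * x (i:ℕ) ^ (t + (j:ℕ)))
        = ∑ r ∈ Fs m l, Matrix.det (Matrix.of fun j i : Fin (m+1) =>
            y ^ (l ((j:ℕ)+1) - r j) * x (i:ℕ) ^ (r j + (j:ℕ))) := by
      rw [hrows]
      exact Matrix.detRowAlternating.toMultilinearMap.map_sum_finset
        (fun (j : Fin (m+1)) (t : ℕ) => fun i : Fin (m+1) => y ^ (l ((j:ℕ)+1) - t) * x (i:ℕ) ^ (t + (j:ℕ)))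
        (fun j : Fin (m+1) => Finset.Icc (l (j:ℕ)) (l ((j:ℕ)+1)))
    rw [hdet, Finset.mul_sum]
    apply Finset.sum_congr rfl
    intro r hr
    have e1 : alt x m (extRow m r)
        = Matrix.det (Matrix.of fun j i : Fin (m+1) => x (i:ℕ) ^ (r j + (j:ℕ))) := by
      rw [altT]
      congr 1
      funext j i
      simp
    have e2 : y ^ wt m l r = y ^ l 0 * ∏ j : Fin (m+1), y ^ (l ((j:ℕ)+1) - r j) := by
      rw [wt, pow_add, Finset.prod_pow_eq_pow_sum]
    calc y ^ wt m l r * alt x m (extRow m r)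
        = (∏ j : Fin (m+1), y ^ (l ((j:ℕ)+1) - r j)) *
            (y ^ l 0 * Matrix.det (Matrix.of fun j i : Fin (m+1) => x (i:ℕ) ^ (r j + (j:ℕ)))) := by
          rw [e1, e2]; ring
      _ = y ^ l 0 * Matrix.det (Matrix.of fun j i : Fin (m+1) =>
            y ^ (l ((j:ℕ)+1) - r j) * x (i:ℕ) ^ (r j + (j:ℕ))) := by
          rw [Matrix.det_mul_column (fun j : Fin (m+1) => y ^ (l ((j:ℕ)+1) - r j))
              (fun j i : Fin (m+1) => x (i:ℕ) ^ (r j + (j:ℕ))),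
            show (Matrix.det fun j i : Fin (m+1) => x (i:ℕ) ^ (r j + (j:ℕ)))
              = Matrix.det (Matrix.of fun j i : Fin (m+1) => x (i:ℕ) ^ (r j + (j:ℕ))) from rfl]
          ring
  rw [stepA]
  -- Step B : multiply rows (indexed by columns i) into the determinant
  rw [show (∏ i : Fin (m+1), (y - x (i:ℕ))) * (y ^ l 0 * Matrix.det (Matrix.of fun j i : Fin (m+1) =>
          ∑ t ∈ Finset.Icc (l (j:ℕ)) (l ((j:ℕ)+1)), y ^ (l ((j:ℕ)+1) - t) * x (i:ℕ) ^ (t + (j:ℕ))))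
      = y ^ l 0 * ((∏ i : Fin (m+1), (y - x (i:ℕ))) * Matrix.det (Matrix.of fun j i : Fin (m+1) =>
          ∑ t ∈ Finset.Icc (l (j:ℕ)) (l ((j:ℕ)+1)), y ^ (l ((j:ℕ)+1) - t) * x (i:ℕ) ^ (t + (j:ℕ))))
    from by ring]
  rw [← Matrix.det_mul_row (fun i : Fin (m+1) => (y - x (i:ℕ)))]
  -- Step C : telescope each entry
  have stepC : (Matrix.of fun j i : Fin (m+1) => (y - x (i:ℕ)) *
        (Matrix.of fun j i : Fin (m+1) =>
          ∑ t ∈ Finset.Icc (l (j:ℕ)) (l ((j:ℕ)+1)), y ^ (l ((j:ℕ)+1) - t) * x (i:ℕ) ^ (t + (j:ℕ))) j i)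
      = Matrix.of fun j i : Fin (m+1) =>
          y ^ (l ((j:ℕ)+1) - l (j:ℕ) + 1) * x (i:ℕ) ^ (l (j:ℕ) + (j:ℕ))
            - x (i:ℕ) ^ (l ((j:ℕ)+1) + 1 + (j:ℕ)) := by
    funext j i
    simp only [Matrix.of_apply]
    exact telescope y (x (i:ℕ)) (l (j:ℕ)) (l ((j:ℕ)+1)) (j:ℕ) (hl _ (by have := j.isLt; omega))
  rw [stepC]
  -- Step D : expand entries (difference of two monomial rows) multilinearly
  set u : Fin (m+1) → Bool → (Fin (m+1) → R) := fun j b =>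
    if b = true then (fun i => -(x (i:ℕ) ^ (l ((j:ℕ)+1) + 1 + (j:ℕ))))
    else (fun i => y ^ (l ((j:ℕ)+1) - l (j:ℕ) + 1) * x (i:ℕ) ^ (l (j:ℕ) + (j:ℕ))) with hu
  have hrows2 : (Matrix.of fun j i : Fin (m+1) =>
        y ^ (l ((j:ℕ)+1) - l (j:ℕ) + 1) * x (i:ℕ) ^ (l (j:ℕ) + (j:ℕ))
          - x (i:ℕ) ^ (l ((j:ℕ)+1) + 1 + (j:ℕ)))
      = Matrix.of (fun j : Fin (m+1) => ∑ b ∈ (Finset.univ : Finset Bool), u j b) := by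
    funext j i
    simp only [Matrix.of_apply]
    rw [Finset.sum_apply, Fintype.sum_bool]
    have ht : u j true i = -(x (i:ℕ) ^ (l ((j:ℕ)+1) + 1 + (j:ℕ))) := rfl
    have hf : u j false i = y ^ (l ((j:ℕ)+1) - l (j:ℕ) + 1) * x (i:ℕ) ^ (l (j:ℕ) + (j:ℕ)) := rfl
    rw [ht, hf]
    ring
  have hdet2 : Matrix.det (Matrix.of fun j i : Fin (m+1) =>
        y ^ (l ((j:ℕ)+1) - l (j:ℕ) + 1) * x (i:ℕ) ^ (l (j:ℕ) + (j:ℕ))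
          - x (i:ℕ) ^ (l ((j:ℕ)+1) + 1 + (j:ℕ)))
      = ∑ r ∈ Fintype.piFinset (fun _ : Fin (m+1) => (Finset.univ : Finset Bool)),
          Matrix.detRowAlternating (fun j => u j (r j)) := by
    rw [hrows2]
    exact Matrix.detRowAlternating.toMultilinearMap.map_sum_finset u (fun _ => Finset.univ)
  have hterm1 : ∀ r : Fin (m+1) → Bool,
      Matrix.detRowAlternating (fun j => u j (r j))
        = (∏ j : Fin (m+1), (if r j = true then (-1 : R) else y ^ (l ((j:ℕ)+1) - l (j:ℕ) + 1))) *
            Matrix.det (Matrix.of fun j i : Fin (m+1) =>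
              x (i:ℕ) ^ (if r j = true then l ((j:ℕ)+1) + 1 + (j:ℕ) else l (j:ℕ) + (j:ℕ))) := by
    intro r
    have hrw : (fun j => u j (r j)) = Matrix.of (fun j i : Fin (m+1) =>
        (if r j = true then (-1 : R) else y ^ (l ((j:ℕ)+1) - l (j:ℕ) + 1)) *
          x (i:ℕ) ^ (if r j = true then l ((j:ℕ)+1) + 1 + (j:ℕ) else l (j:ℕ) + (j:ℕ))) := by
      funext j i
      by_cases h : r j = true <;> simp [hu, h]
    rw [show Matrix.detRowAlternating (fun j => u j (r j))
        = Matrix.det (Matrix.of (fun j i : Fin (m+1) =>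
            (if r j = true then (-1 : R) else y ^ (l ((j:ℕ)+1) - l (j:ℕ) + 1)) *
              x (i:ℕ) ^ (if r j = true then l ((j:ℕ)+1) + 1 + (j:ℕ) else l (j:ℕ) + (j:ℕ))))
      from by rw [← hrw]; rfl]
    rw [Matrix.det_mul_column
        (fun j => if r j = true then (-1 : R) else y ^ (l ((j:ℕ)+1) - l (j:ℕ) + 1))
        (fun j i : Fin (m+1) =>
          x (i:ℕ) ^ (if r j = true then l ((j:ℕ)+1) + 1 + (j:ℕ) else l (j:ℕ) + (j:ℕ))),
      show (Matrix.det fun j i : Fin (m+1) =>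
          x (i:ℕ) ^ (if r j = true then l ((j:ℕ)+1) + 1 + (j:ℕ) else l (j:ℕ) + (j:ℕ)))
        = Matrix.det (Matrix.of fun j i : Fin (m+1) =>
          x (i:ℕ) ^ (if r j = true then l ((j:ℕ)+1) + 1 + (j:ℕ) else l (j:ℕ) + (j:ℕ))) from rfl]
  have hzero : ∀ r : Fin (m+1) → Bool, (¬ ∃ k : Fin (m+2), r = thr m k) →
      Matrix.det (Matrix.of fun j i : Fin (m+1) =>
        x (i:ℕ) ^ (if r j = true then l ((j:ℕ)+1) + 1 + (j:ℕ) else l (j:ℕ) + (j:ℕ))) = 0 := by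
    intro r hr
    have hbad : ∃ j : Fin m, r j.castSucc = true ∧ r j.succ = false := by
      by_contra hno
      push_neg at hno
      refine hr (thr_exists m r (fun j hj => ?_))
      cases hb : r j.succ with
      | false => exact absurd hb (hno j hj)
      | true => rfl
    obtain ⟨j, h1, h2⟩ := hbad
    apply Matrix.det_zero_of_row_eq (show j.castSucc ≠ j.succ from (Fin.castSucc_lt_succ : j.castSucc < j.succ).ne)
    funext i
    simp only [Matrix.of_apply, h1, h2, if_true, if_false, Bool.false_eq_true, if_neg,
      Fin.coe_castSucc, Fin.val_succ]
    congr 1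
    omega
  have himage : ∑ r ∈ Fintype.piFinset (fun _ : Fin (m+1) => (Finset.univ : Finset Bool)),
      Matrix.detRowAlternating (fun j => u j (r j))
    = ∑ k : Fin (m+2), Matrix.detRowAlternating (fun j => u j (thr m k j)) := by
    rw [Fintype.piFinset_univ]
    have h1 : ∑ r ∈ Finset.image (thr m) Finset.univ,
          Matrix.detRowAlternating (fun j => u j (r j))
        = ∑ k : Fin (m+2), Matrix.detRowAlternating (fun j => u j (thr m k j)) :=
      Finset.sum_image (fun k _ k' _ h => thr_inj m h)
    rw [← h1]
    refine (Finset.sum_subset (Finset.subset_univ _) (fun r _ hrim => ?_)).symm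
    have hne : ¬ ∃ k : Fin (m+2), r = thr m k := by
      rintro ⟨k, hk⟩
      exact hrim (Finset.mem_image.2 ⟨k, Finset.mem_univ k, hk.symm⟩)
    rw [hterm1 r, hzero r hne, mul_zero]
  -- cofactor expansion of the big alternant along its last row
  have hsub : ∀ k : Fin (m+2),
      ((Matrix.of fun i j : Fin (m+2) => x (i:ℕ) ^ (l (j:ℕ) + (j:ℕ))).submatrix
          (Fin.last (m+1)).succAbove k.succAbove)
        = Matrix.of fun i j : Fin (m+1) =>
            x (i:ℕ) ^ (l ((k.succAbove j : ℕ)) + ((k.succAbove j : ℕ))) := by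
    intro k
    funext i j
    simp [Matrix.submatrix_apply, Fin.succAbove_last, Fin.coe_castSucc]
  have cofactor : alt x (m+1) l = ∑ k : Fin (m+2),
      (-1 : R) ^ ((m+1) + (k:ℕ)) * y ^ (l (k:ℕ) + (k:ℕ)) *
        Matrix.det (Matrix.of fun i j : Fin (m+1) =>
          x (i:ℕ) ^ (l ((k.succAbove j : ℕ)) + ((k.succAbove j : ℕ)))) := by
    rw [alt, Matrix.det_succ_row _ (Fin.last (m+1))]
    apply Finset.sum_congr rfl
    intro k _
    rw [hsub k]
    simp only [Matrix.of_apply, Fin.val_last]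
    try rw [← hy]
  have hsign : ∀ k : Fin (m+2), ((-1:R)) ^ ((m+1) + (k:ℕ)) = (-1) ^ ((m+1) - (k:ℕ)) := by
    intro k
    have hk := k.isLt
    have h1 : (m+1) + (k:ℕ) = ((m+1) - (k:ℕ)) + 2 * (k:ℕ) := by omega
    rw [h1, pow_add, pow_mul]
    simp
  have hcount : ∀ k : Fin (m+2),
      (∏ j : Fin (m+1), (if thr m k j = true then (-1:R) else y ^ (l ((j:ℕ)+1) - l (j:ℕ) + 1)))
        = (-1:R) ^ ((m+1) - (k:ℕ)) * y ^ (∑ j ∈ Finset.range (k:ℕ), (l (j+1) - l j + 1)) := by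
    intro k
    have hk : (k:ℕ) ≤ m + 1 := by have := k.isLt; omega
    have hstep : (∏ j : Fin (m+1), (if thr m k j = true then (-1:R)
          else y ^ (l ((j:ℕ)+1) - l (j:ℕ) + 1)))
        = ∏ j ∈ Finset.range (m+1), (if (k:ℕ) ≤ j then (-1:R) else y ^ (l (j+1) - l j + 1)) := by
      rw [← Fin.prod_univ_eq_prod_range (fun jn =>
        if (k:ℕ) ≤ jn then (-1:R) else y ^ (l (jn+1) - l jn + 1)) (m+1)]
      exact Finset.prod_congr rfl (fun j _ => by simp [thr])
    rw [hstep]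
    rw [← Finset.prod_range_mul_prod_Ico (fun jn =>
      if (k:ℕ) ≤ jn then (-1:R) else y ^ (l (jn+1) - l jn + 1)) hk]
    have hA : ∏ j ∈ Finset.range (k:ℕ), (if (k:ℕ) ≤ j then (-1:R) else y ^ (l (j+1) - l j + 1))
        = y ^ (∑ j ∈ Finset.range (k:ℕ), (l (j+1) - l j + 1)) := by
      rw [← Finset.prod_pow_eq_pow_sum]
      exact Finset.prod_congr rfl (fun j hj => by
        rw [Finset.mem_range] at hj
        rw [if_neg (by omega)])
    have hB : ∏ j ∈ Finset.Ico (k:ℕ) (m+1), (if (k:ℕ) ≤ j then (-1:R)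
          else y ^ (l (j+1) - l j + 1))
        = (-1:R) ^ ((m+1) - (k:ℕ)) := by
      have hall : ∀ j ∈ Finset.Ico (k:ℕ) (m+1),
          (if (k:ℕ) ≤ j then (-1:R) else y ^ (l (j+1) - l j + 1)) = -1 := by
        intro j hj
        rw [Finset.mem_Ico] at hj
        rw [if_pos hj.1]
      rw [Finset.prod_congr rfl hall, Finset.prod_const, Nat.card_Ico]
    rw [hA, hB]
    ring
  rw [cofactor, hdet2, himage, Finset.mul_sum]
  apply Finset.sum_congr rfl
  intro k _
  rw [hterm1, hcount k, hsign k]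
  have hminor : Matrix.det (Matrix.of fun j i : Fin (m+1) =>
        x (i:ℕ) ^ (if thr m k j = true then l ((j:ℕ)+1) + 1 + (j:ℕ) else l (j:ℕ) + (j:ℕ)))
      = Matrix.det (Matrix.of fun i j : Fin (m+1) =>
          x (i:ℕ) ^ (l ((k.succAbove j : ℕ)) + ((k.succAbove j : ℕ)))) := by
    rw [← Matrix.det_transpose (Matrix.of fun i j : Fin (m+1) =>
          x (i:ℕ) ^ (l ((k.succAbove j : ℕ)) + ((k.succAbove j : ℕ))))]
    congr 1
    funext j i
    simp only [Matrix.transpose_apply, Matrix.of_apply]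
    by_cases h : (k:ℕ) ≤ (j:ℕ)
    · rw [if_pos (by simp [thr, h]), Fin.succAbove_of_le_castSucc _ _ (by
        simp [Fin.le_def, Fin.coe_castSucc, h])]
      simp only [Fin.val_succ]
      congr 1
      omega
    · rw [if_neg (by simp [thr, h]), Fin.succAbove_of_castSucc_lt _ _ (by
        simp [Fin.lt_def, Fin.coe_castSucc]; omega)]
      simp only [Fin.coe_castSucc]
  rw [hminor]
  have hexp : y ^ l 0 * y ^ (∑ j ∈ Finset.range (k:ℕ), (l (j+1) - l j + 1))
      = y ^ (l (k:ℕ) + (k:ℕ)) := by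
    rw [← pow_add, exps l m hl (k:ℕ) (by have := k.isLt; omega)]
  rw [← hexp]
  ring

lemma IioRange (m : ℕ) (g : ℕ → ℕ → R) :
    (∏ j : Fin (m+1), ∏ i ∈ Finset.Iio j, g (i:ℕ) (j:ℕ))
      = ∏ j ∈ Finset.range (m+1), ∏ i ∈ Finset.range j, g i j := by
  rw [← Fin.prod_univ_eq_prod_range (fun jn => ∏ i ∈ Finset.range jn, g i jn) (m+1)]
  apply Finset.prod_congr rfl
  intro j _
  rw [← Nat.Iio_eq_range, ← Fin.map_valEmbedding_Iio (a := j), Finset.prod_map]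
  simp only [Fin.valEmbedding_apply]

lemma IoiIio (m : ℕ) (g : ℕ → ℕ → R) :
    (∏ i : Fin (m+1), ∏ j ∈ Finset.Ioi i, g (i:ℕ) (j:ℕ))
      = ∏ j ∈ Finset.range (m+1), ∏ i ∈ Finset.range j, g i j := by
  rw [Finset.prod_comm' (t' := (Finset.univ : Finset (Fin (m+1))))
    (s' := fun j => Finset.Iio j) (by
      intro i j
      simp only [Finset.mem_Ioi, Finset.mem_Iio, Finset.mem_univ, and_true, true_and])]
  exact IioRange m g

lemma altzero (x : ℕ → R) (m : ℕ) :
    alt x m (fun _ => 0) = ∏ j ∈ Finset.range (m+1), ∏ i ∈ Finset.range j, (x j - x i) := by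
  rw [alt]
  rw [show (Matrix.of fun i j : Fin (m+1) => x (i:ℕ) ^ ((fun _ : ℕ => 0) (j:ℕ) + (j:ℕ)))
      = Matrix.vandermonde (fun i : Fin (m+1) => x (i:ℕ)) from by
    funext i j
    simp [Matrix.vandermonde]]
  rw [Matrix.det_vandermonde]
  exact IoiIio m (fun i j => x j - x i)

lemma Sch_mul_vdm (x : ℕ → R) : ∀ (m : ℕ) (l : ℕ → ℕ), (∀ j, j < m → l j ≤ l (j+1)) →
    Sch x m l * alt x m (fun _ => 0) = alt x m l := by
  intro m
  induction m with
  | zero =>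
      intro l _
      rw [Sch, alt, alt]
      rw [Matrix.det_fin_one, Matrix.det_fin_one]
      simp
  | succ m ih =>
      intro l hl
      have hkey := key x m l (fun j hj => hl j (by omega))
      have hsplit : alt x (m+1) (fun _ => 0)
          = (∏ i : Fin (m+1), (x (m+1) - x (i:ℕ))) * alt x m (fun _ => 0) := by
        rw [altzero, altzero, Finset.prod_range_succ]
        rw [← Fin.prod_univ_eq_prod_range (fun i => x (m+1) - x i) (m+1)]
        ring
      rw [Sch, hkey, hsplit, Finset.sum_mul, Finset.mul_sum]
      apply Finset.sum_congr rfl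
      intro f hf
      have hmono : ∀ j, j < m → extRow m f j ≤ extRow m f (j+1) := by
        intro j hj
        have h1 := (mem_Fs.1 hf ⟨j, by omega⟩).2
        have h2 := (mem_Fs.1 hf ⟨j+1, by omega⟩).1
        simp only [extRow] at *
        rw [dif_pos (by omega : j < m+1), dif_pos (by omega : j+1 < m+1)]
        exact le_trans (by simpa using h1) (by simpa using h2)
      rw [← ih (extRow m f) hmono]
      ring

open MvPolynomial in
noncomputable def xv (n : ℕ) : ℕ → MvPolynomial (Fin (n+1)) ℤ :=
  fun i => if h : i < n+1 then X ⟨i, h⟩ else 0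

@[simp] lemma xv_coe (n : ℕ) (i : Fin (n+1)) : xv n (i:ℕ) = MvPolynomial.X i := by
  simp [xv, i.isLt]

open MvPolynomial in
lemma schur_staircase (n : ℕ) :
    Sch (xv n) n (fun j => j)
      = ∏ j : Fin (n+1), ∏ i ∈ Finset.Iio j, (X i + X j) := by
  have hV : alt (xv n) n (fun _ => 0)
      = ∏ j ∈ Finset.range (n+1), ∏ i ∈ Finset.range j, (xv n j - xv n i) := altzero _ n
  have hVne : alt (xv n) n (fun _ => 0) ≠ 0 := by
    rw [hV]
    rw [Finset.prod_ne_zero_iff]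
    intro j hj
    rw [Finset.prod_ne_zero_iff]
    intro i hi
    rw [Finset.mem_range] at hj hi
    have hj' : j < n+1 := hj
    have hi' : i < n+1 := by omega
    rw [show xv n j = X (⟨j, hj'⟩ : Fin (n+1)) from by simp [xv, hj'],
      show xv n i = X (⟨i, hi'⟩ : Fin (n+1)) from by simp [xv, hi']]
    refine sub_ne_zero.2 (fun hXX => ?_)
    have := MvPolynomial.X_injective hXX
    simp only [Fin.mk.injEq] at this
    omega
  have hstair : alt (xv n) n (fun j => j)
      = ∏ j ∈ Finset.range (n+1), ∏ i ∈ Finset.range j, ((xv n j)^2 - (xv n i)^2) := by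
    rw [alt]
    rw [show (Matrix.of fun i j : Fin (n+1) => xv n (i:ℕ) ^ ((fun t : ℕ => t) (j:ℕ) + (j:ℕ)))
        = Matrix.vandermonde (fun i : Fin (n+1) => (xv n (i:ℕ))^2) from by
      funext i j
      simp only [Matrix.vandermonde, Matrix.of_apply, ← pow_mul]
      congr 1
      omega]
    rw [Matrix.det_vandermonde]
    exact IoiIio n (fun i j => (xv n j)^2 - (xv n i)^2)
  have hmul := Sch_mul_vdm (xv n) n (fun j => j) (fun j _ => by simp)
  have hfac : (∏ j ∈ Finset.range (n+1), ∏ i ∈ Finset.range j, ((xv n j)^2 - (xv n i)^2))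
      = (∏ j ∈ Finset.range (n+1), ∏ i ∈ Finset.range j, (xv n i + xv n j)) *
        (∏ j ∈ Finset.range (n+1), ∏ i ∈ Finset.range j, (xv n j - xv n i)) := by
    rw [← Finset.prod_mul_distrib]
    apply Finset.prod_congr rfl
    intro j _
    rw [← Finset.prod_mul_distrib]
    apply Finset.prod_congr rfl
    intro i _
    ring
  have hcancel : Sch (xv n) n (fun j => j)
      = ∏ j ∈ Finset.range (n+1), ∏ i ∈ Finset.range j, (xv n i + xv n j) := by
    apply mul_right_cancel₀ hVne
    rw [hmul, hstair, hfac, hV]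
  rw [hcancel, ← IioRange n (fun i j => xv n i + xv n j)]
  apply Finset.prod_congr rfl
  intro j _
  apply Finset.prod_congr rfl
  intro i hi
  rw [xv_coe, xv_coe]

noncomputable local instance : DecidableEq (ℕ → ℕ → ℕ) := Classical.decEq _

def addRow (k : ℕ) (l : ℕ → ℕ) (g : ℕ → ℕ → ℕ) : ℕ → ℕ → ℕ :=
  fun i j => if i = k then (if j ≤ k then l j else 0) else g i j

noncomputable def GTset : ℕ → (ℕ → ℕ) → Finset (ℕ → ℕ → ℕ)
  | 0, l => {fun i j => if i = 0 ∧ j = 0 then l 0 else 0}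
  | (m+1), l => (Fs m l).biUnion (fun f => (GTset m (extRow m f)).image (addRow (m+1) l))

lemma mem_GTset : ∀ (m : ℕ) (l : ℕ → ℕ) (g : ℕ → ℕ → ℕ),
    g ∈ GTset m l ↔ (IsGTPattern m g ∧ ∀ j, j ≤ m → g m j = l j) := by
  intro m
  induction m with
  | zero =>
      intro l g
      rw [GTset, Finset.mem_singleton]
      constructor
      · rintro rfl
        refine ⟨⟨fun i j h1 h2 _ => by omega, fun i j hij => ?_⟩, fun j hj => ?_⟩
        · show (if i = 0 ∧ j = 0 then l 0 else 0) = 0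
          rw [if_neg (fun hc : i = 0 ∧ j = 0 => hij ⟨by omega, by omega⟩)]
        · show (if (0:ℕ) = 0 ∧ j = 0 then l 0 else 0) = l j
          rw [if_pos ⟨rfl, by omega⟩]
          congr 1
          omega
      · rintro ⟨⟨_, hzero⟩, hbot⟩
        funext i j
        by_cases hij : i = 0 ∧ j = 0
        · rw [if_pos hij, hij.1, hij.2]
          exact hbot 0 le_rfl
        · rw [if_neg hij]
          exact hzero i j (fun hc => hij ⟨by omega, by omega⟩)
  | succ m ih =>
      intro l g
      rw [GTset, Finset.mem_biUnion]
      simp only [Finset.mem_image]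
      constructor
      · rintro ⟨f, hf, g', hg', rfl⟩
        obtain ⟨⟨hint, hzero⟩, hbot⟩ := (ih (extRow m f) g').1 hg'
        have hFs := mem_Fs.1 hf
        refine ⟨⟨?_, ?_⟩, ?_⟩
        · intro i j h1 h2 hj
          by_cases hi : i = m + 1
          · subst hi
            have hfj := hFs ⟨j, by omega⟩
            have e1 : addRow (m+1) l g' (m+1) j = l j := by
              rw [addRow, if_pos rfl, if_pos (by omega)]
            have e2 : addRow (m+1) l g' (m+1) (j+1) = l (j+1) := by
              rw [addRow, if_pos rfl, if_pos (by omega)]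
            have e3 : addRow (m+1) l g' (m+1-1) j = g' m j := by
              rw [addRow, if_neg (by omega)]
              congr 1
            have e4 : g' m j = f ⟨j, by omega⟩ := by
              rw [hbot j (by omega)]
              simp [extRow, show j < m + 1 by omega]
            rw [e1, e2, e3, e4]
            simpa using hfj
          · have hle : i ≤ m := by omega
            have e1 : addRow (m+1) l g' i j = g' i j := by
              rw [addRow, if_neg (by omega)]
            have e2 : addRow (m+1) l g' (i-1) j = g' (i-1) j := by
              rw [addRow, if_neg (by omega)]
            have e3 : addRow (m+1) l g' i (j+1) = g' i (j+1) := by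
              rw [addRow, if_neg (by omega)]
            rw [e1, e2, e3]
            exact hint i j h1 hle hj
        · intro i j hij
          by_cases hi : i = m + 1
          · subst hi
            rw [addRow, if_pos rfl, if_neg (by omega)]
          · rw [addRow, if_neg hi]
            exact hzero i j (fun hc => hij ⟨hc.1, by omega⟩)
        · intro j hj
          rw [addRow, if_pos rfl, if_pos hj]
      · rintro ⟨⟨hint, hzero⟩, hbot⟩
        refine ⟨fun j => g m (j:ℕ), ?_, fun i j => if i = m + 1 then 0 else g i j, ?_, ?_⟩
        · rw [mem_Fs]
          intro j
          have := hint (m+1) (j:ℕ) (by omega) le_rfl (by have := j.isLt; omega)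
          simp only [Nat.add_sub_cancel] at this
          rw [hbot (j:ℕ) (by have := j.isLt; omega), hbot ((j:ℕ)+1) (by have := j.isLt; omega)] at this
          exact this
        · rw [ih]
          refine ⟨⟨?_, ?_⟩, ?_⟩
          · intro i j h1 h2 hj
            beta_reduce
            simp only [if_neg (show ¬ i = m + 1 by omega), if_neg (show ¬ i - 1 = m + 1 by omega)]
            exact hint i j h1 (by omega) hj
          · intro i j hij
            beta_reduce
            by_cases hi : i = m + 1
            · rw [if_pos hi]
            · rw [if_neg hi]
              by_cases hi2 : i ≤ m + 1
              · exact hzero i j (fun hc => hij ⟨hc.1, by omega⟩)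
              · exact hzero i j (fun hc => by omega)
          · intro j hj
            beta_reduce
            rw [if_neg (by omega : ¬ m = m + 1)]
            simp [extRow, show j < m + 1 by omega]
        · funext i j
          by_cases hi : i = m + 1
          · subst hi
            rw [addRow, if_pos rfl]
            by_cases hj : j ≤ m + 1
            · rw [if_pos hj, hbot j hj]
            · rw [if_neg hj, hzero (m+1) j (fun hc => hj hc.1)]
          · rw [addRow, if_neg hi, if_neg hi]

lemma rowSum_zero_of_pattern {m : ℕ} {g : ℕ → ℕ → ℕ} (hg : IsGTPattern m g) {i : ℕ}
    (hi : m < i) : rowSum g i = 0 := by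
  rw [rowSum]
  apply Finset.sum_eq_zero
  intro j _
  exact hg.2 i j (fun hc => by omega)

lemma addRow_inj {m : ℕ} {l : ℕ → ℕ} {g1 g2 : ℕ → ℕ → ℕ}
    (h1 : IsGTPattern m g1) (h2 : IsGTPattern m g2)
    (he : addRow (m+1) l g1 = addRow (m+1) l g2) : g1 = g2 := by
  funext i j
  by_cases hi : i = m + 1
  · subst hi
    rw [h1.2 (m+1) j (fun hc => by omega), h2.2 (m+1) j (fun hc => by omega)]
  · have := congrFun (congrFun he i) j
    simp only [addRow, if_neg hi] at this
    exact this

open MvPolynomial in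
lemma sum_GTset (n : ℕ) : ∀ (m : ℕ), m ≤ n → ∀ l : ℕ → ℕ,
    ∑ g ∈ GTset m l, gtWeight n g = Sch (xv n) m l := by
  intro m
  induction m with
  | zero =>
      intro _ l
      rw [GTset, Finset.sum_singleton, Sch]
      have hfac : ∀ i : Fin (n+1),
          (X i : MvPolynomial (Fin (n+1)) ℤ) ^ (rowSum (fun i j => if i = 0 ∧ j = 0 then l 0 else 0) (i:ℕ) -
            (if (i:ℕ) = 0 then 0 else
              rowSum (fun i j => if i = 0 ∧ j = 0 then l 0 else 0) ((i:ℕ)-1)))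
          = (if i = (0 : Fin (n+1)) then X i ^ l 0 else 1) := by
        intro i
        by_cases hi : i = (0 : Fin (n+1))
        · subst hi
          rw [if_pos rfl]
          have h0 : ((0 : Fin (n+1)) : ℕ) = 0 := rfl
          rw [h0, if_pos rfl]
          have hr : rowSum (fun i j => if i = 0 ∧ j = 0 then l 0 else 0) 0 = l 0 := by
            rw [rowSum]
            simp
          rw [hr, Nat.sub_zero]
        · rw [if_neg hi]
          have hvi : (i:ℕ) ≠ 0 := fun h => hi (Fin.ext h)
          have hr : rowSum (fun i j => if i = 0 ∧ j = 0 then l 0 else 0) (i:ℕ) = 0 := by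
            rw [rowSum]
            apply Finset.sum_eq_zero
            intro j _
            rw [if_neg (fun hc => hvi hc.1)]
          rw [hr]
          simp
      rw [gtWeight, Finset.prod_congr rfl (fun i _ => hfac i),
        Finset.prod_ite_eq' Finset.univ (0 : Fin (n+1)) (fun i => X i ^ l 0),
        if_pos (Finset.mem_univ _)]
      rw [show xv n 0 = X (0 : Fin (n+1)) from by simpa using xv_coe n 0]
  | succ m ih =>
      intro hm l
      have hmn : m + 1 < n + 1 := by omega
      set M : Fin (n+1) := ⟨m+1, hmn⟩ with hM
      rw [GTset]
      rw [Finset.sum_biUnion (by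
        intro f1 hf1 f2 hf2 hne
        apply Finset.disjoint_left.2
        intro g hg1 hg2
        apply hne
        obtain ⟨g1, hg1m, he1⟩ := Finset.mem_image.1 hg1
        obtain ⟨g2, hg2m, he2⟩ := Finset.mem_image.1 hg2
        have hb1 := ((mem_GTset m _ g1).1 hg1m).2
        have hb2 := ((mem_GTset m _ g2).1 hg2m).2
        funext k
        have e1 : g m (k:ℕ) = extRow m f1 (k:ℕ) := by
          rw [← he1]
          rw [show addRow (m+1) l g1 m (k:ℕ) = g1 m (k:ℕ) from by
            rw [addRow, if_neg (by omega)]]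
          exact hb1 (k:ℕ) (by have := k.isLt; omega)
        have e2 : g m (k:ℕ) = extRow m f2 (k:ℕ) := by
          rw [← he2]
          rw [show addRow (m+1) l g2 m (k:ℕ) = g2 m (k:ℕ) from by
            rw [addRow, if_neg (by omega)]]
          exact hb2 (k:ℕ) (by have := k.isLt; omega)
        have := e1.symm.trans e2
        rwa [extRow_coe, extRow_coe] at this)]
      rw [Sch]
      apply Finset.sum_congr rfl
      intro f hf
      rw [Finset.sum_image (fun g1 hg1 g2 hg2 he =>
        addRow_inj ((mem_GTset m _ g1).1 hg1).1 ((mem_GTset m _ g2).1 hg2).1 he)]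
      have hW : ∀ g' ∈ GTset m (extRow m f),
          gtWeight n (addRow (m+1) l g') = xv n (m+1) ^ wt m l f * gtWeight n g' := by
        intro g' hg'
        obtain ⟨hpat, hbot⟩ := (mem_GTset m _ g').1 hg'
        have hrsEq : ∀ i, i ≤ m → rowSum (addRow (m+1) l g') i = rowSum g' i := by
          intro i hi
          rw [rowSum, rowSum]
          exact Finset.sum_congr rfl (fun j _ => by rw [addRow, if_neg (by omega)])
        have hrsTop : rowSum (addRow (m+1) l g') (m+1) = ∑ j ∈ Finset.range (m+2), l j := by
          rw [rowSum]
          apply Finset.sum_congr rfl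
          intro j hj
          rw [Finset.mem_range] at hj
          rw [addRow, if_pos rfl, if_pos (by omega)]
        have hrsHigh : ∀ i, m + 1 < i → rowSum (addRow (m+1) l g') i = 0 := by
          intro i hi
          rw [rowSum]
          apply Finset.sum_eq_zero
          intro j _
          rw [addRow, if_neg (by omega)]
          exact hpat.2 i j (fun hc => by omega)
        have hrsHigh' : ∀ i, m < i → rowSum g' i = 0 := fun i hi =>
          rowSum_zero_of_pattern hpat hi
        have hbotSum : rowSum g' m = ∑ j : Fin (m+1), f j := by
          rw [rowSum]
          rw [← Fin.sum_univ_eq_sum_range (fun jn => g' m jn) (m+1)]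
          apply Finset.sum_congr rfl
          intro j _
          rw [hbot (j:ℕ) (by have := j.isLt; omega), extRow_coe]
        have hsle : ∑ j : Fin (m+1), f j ≤ ∑ j : Fin (m+1), l ((j:ℕ)+1) :=
          Finset.sum_le_sum (fun j _ => (mem_Fs.1 hf j).2)
        have hwt : wt m l f + rowSum g' m = ∑ j ∈ Finset.range (m+2), l j := by
          rw [wt, hbotSum]
          have h1 : ∑ j : Fin (m+1), (l ((j:ℕ)+1) - f j)
              = (∑ j : Fin (m+1), l ((j:ℕ)+1)) - ∑ j : Fin (m+1), f j :=
            Finset.sum_tsub_distrib Finset.univ (fun j _ => (mem_Fs.1 hf j).2)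
          have h3 : ∑ j ∈ Finset.range (m+2), l j
              = (∑ j ∈ Finset.range (m+1), l (j+1)) + l 0 :=
            Finset.sum_range_succ' (fun j => l j) (m+1)
          have h4 : ∑ j : Fin (m+1), l ((j:ℕ)+1) = ∑ j ∈ Finset.range (m+1), l (j+1) :=
            Fin.sum_univ_eq_sum_range (fun jn => l (jn+1)) (m+1)
          rw [h1, h3, ← h4]
          generalize (∑ j : Fin (m+1), l ((j:ℕ)+1)) = A at *
          generalize (∑ j : Fin (m+1), f j) = B at *
          omega
        have hfac : ∀ i : Fin (n+1),
            (X i : MvPolynomial (Fin (n+1)) ℤ) ^ (rowSum (addRow (m+1) l g') (i:ℕ) -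
              (if (i:ℕ) = 0 then 0 else rowSum (addRow (m+1) l g') ((i:ℕ)-1)))
            = (if i = M then X i ^ wt m l f else 1) *
              X i ^ (rowSum g' (i:ℕ) - (if (i:ℕ) = 0 then 0 else rowSum g' ((i:ℕ)-1))) := by
          intro i
          by_cases hiM : i = M
          · subst hiM
            rw [if_pos rfl]
            have hv : (M:ℕ) = m + 1 := rfl
            rw [hv]
            rw [if_neg (by omega : ¬ m + 1 = 0), if_neg (by omega : ¬ m + 1 = 0)]
            have hs1 : m + 1 - 1 = m := by omega
            rw [hs1, hrsTop, hrsEq m le_rfl, hrsHigh' (m+1) (by omega)]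
            rw [← pow_add]
            congr 1
            have := hwt
            generalize (∑ j ∈ Finset.range (m+2), l j) = A at *
            generalize (rowSum g' m) = B at *
            omega
          · rw [if_neg hiM, one_mul]
            congr 1
            have hvi : (i:ℕ) ≠ m + 1 := fun h => hiM (Fin.ext h)
            by_cases hv0 : (i:ℕ) = 0
            · rw [hv0]
              simp only [if_pos rfl]
              rw [show rowSum (addRow (m+1) l g') 0 = rowSum g' 0 from hrsEq 0 (by omega)]
            · rw [if_neg hv0, if_neg hv0]
              by_cases hvle : (i:ℕ) ≤ m
              · rw [hrsEq _ hvle, hrsEq _ (by omega)]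
              · have hgt : m + 1 < (i:ℕ) := by omega
                have e1 := hrsHigh _ hgt
                have e2 := hrsHigh' (i:ℕ) (by omega)
                generalize hA : rowSum (addRow (m+1) l g') ((i:ℕ)-1) = A
                generalize hB : rowSum g' ((i:ℕ)-1) = B
                omega
        rw [gtWeight, gtWeight, Finset.prod_congr rfl (fun i _ => hfac i),
          Finset.prod_mul_distrib,
          Finset.prod_ite_eq' Finset.univ M (fun i => X i ^ wt m l f),
          if_pos (Finset.mem_univ _)]
        rw [show xv n (m+1) = X M from xv_coe n M]
      rw [Finset.sum_congr rfl hW, ← Finset.mul_sum, ih (by omega) (extRow m f)]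

end GTAux

open GTAux in
theorem stmt6 (n : ℕ) (S : Finset (ℕ → ℕ → ℕ))
    (hS : ∀ h, h ∈ S ↔ IsGTPattern n h ∧ ∀ j, j ≤ n → h n j = j) :
    ∑ h ∈ S, gtWeight n h =
      ∏ j : Fin (n + 1), ∏ i ∈ Finset.Iio j,
        (MvPolynomial.X i + MvPolynomial.X j) := by
  have hSet : S = GTset n (fun j => j) := by
    apply Finset.ext
    intro g
    rw [hS, mem_GTset]
  rw [hSet, sum_GTset n n le_rfl (fun j => j), schur_staircase n]
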